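/- If a finite subset A of an abelian group G tiles G by translation (there is T ⊆ G with A + T = G a tiling), then A tiles the subgroup H generated by A − A (equivalently, a suitable translate of A tiles the subgroup it generates). -/
import Mathlib


/-- If a finite subset `A` of a finite abelian group `G` containing `0`
tiles `G` with complement `T`, then `A` tiles the subgroup `H` generated by `A`:
`A + (T ∩ H) = H` is a tiling of `H`. -/
theorem stmt9 (G : Type*) [AddCommGroup G] [Fintype G]
    (A T : Finset G) (h0 : (0 : G) ∈ A)
    (htile : ∀ g : G, ∃! p : G × G, p.1 ∈ A ∧ p.2 ∈ T ∧ p.1 + p.2 = g) :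
    ∀ g ∈ AddSubgroup.closure (A : Set G),
      ∃! p : G × G, p.1 ∈ A ∧ (p.2 ∈ T ∧ p.2 ∈ AddSubgroup.closure (A : Set G)) ∧
        p.1 + p.2 = g := by
  intro g hg
  obtain ⟨p, ⟨hA, hT, hsum⟩, huniq⟩ := htile g
  refine ⟨p, ⟨hA, ⟨hT, ?_⟩, hsum⟩, fun q ⟨qA, ⟨qT, _⟩, qsum⟩ => huniq q ⟨qA, qT, qsum⟩⟩
  have h1 : p.1 ∈ AddSubgroup.closure (A : Set G) := AddSubgroup.subset_closure hA
  have : p.2 = g - p.1 := by rw [← hsum]; abel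
  rw [this]
  exact sub_mem hg h1
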